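/- The 5-dimensional Lebesgue volume of the polytope P_C = {x ∈ ℝ^5 : x_i ≥ 0 for all i, x1+x2+x3+x4+x5 ≤ 1, 2(x1+x2+x5) ≥ 1, 2(x1+x2+x3) ≥ 1} equals 1/384. -/

import Mathlib

open MeasureTheory Set ENNReal Function

noncomputable section CondorcetAux

namespace CondorcetAux

/-! ### Auxiliary definitions: intermediate iterated integrals -/

def Sc : Set (Fin 5 → ℝ) := {x | (∀ i, 0 ≤ x i) ∧ x 0 + x 1 + x 2 + x 3 + x 4 ≤ 1 ∧
      1 ≤ 2 * (x 0 + x 1 + x 4) ∧ 1 ≤ 2 * (x 0 + x 1 + x 2)}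

def f4 (x : Fin 5 → ℝ) : ℝ≥0∞ :=
  if 0 ≤ x 0 ∧ 0 ≤ x 1 ∧ 0 ≤ x 2 ∧ 1 ≤ 2 * (x 0 + x 1 + x 2) then
    (if 0 ≤ x 3 then ENNReal.ofReal (1 - x 0 - x 1 - x 2 - x 3 - max (1/2 - x 0 - x 1) 0)
     else 0) else 0

def f3 (x : Fin 5 → ℝ) : ℝ≥0∞ :=
  if 0 ≤ x 0 ∧ 0 ≤ x 1 then
    (if 0 ≤ x 2 ∧ 1 ≤ 2 * (x 0 + x 1 + x 2) then
      ENNReal.ofReal ((max 0 (1 - x 0 - x 1 - x 2 - max (1/2 - x 0 - x 1) 0))^2 / 2)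
     else 0) else 0

def f2 (x : Fin 5 → ℝ) : ℝ≥0∞ :=
  if 0 ≤ x 0 then
    (if 0 ≤ x 1 then
      ENNReal.ofReal ((max 0 (1 - x 0 - x 1 - 2 * max (1/2 - x 0 - x 1) 0))^3 / 6)
     else 0) else 0

def f1 (x : Fin 5 → ℝ) : ℝ≥0∞ :=
  if 0 ≤ x 0 then
    (if x 0 ≤ 1/2 then
       ENNReal.ofReal ((1/16 - (x 0)^4) / 24) + ENNReal.ofReal (1/384)
     else ENNReal.ofReal ((max 0 (1 - x 0))^4 / 24)) else 0

/-! ### One-dimensional integration lemmas -/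

lemma ofReal_max0 (r : ℝ) : ENNReal.ofReal r = ENNReal.ofReal (max 0 r) := by
  rcases le_total 0 r with h | h
  · rw [max_eq_right h]
  · rw [max_eq_left h, ENNReal.ofReal_of_nonpos h, ENNReal.ofReal_zero]

lemma key_Ioi (a c K : ℝ) (hK : 0 < K) (n : ℕ) (hn : 0 < n) :
    ∫⁻ t in Ioi a, ENNReal.ofReal ((max 0 (c - t))^n / K)
      = ENNReal.ofReal ((max 0 (c - a))^(n+1) / ((n+1) * K)) := by
  rcases le_or_gt c a with h | h
  · rw [setLIntegral_congr_fun measurableSet_Ioi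
      (fun t (ht : a < t) => by
        rw [max_eq_left (by linarith), zero_pow hn.ne', zero_div, ENNReal.ofReal_zero])]
    rw [lintegral_zero, max_eq_left (by linarith), zero_pow (by omega), zero_div,
      ENNReal.ofReal_zero]
  · have hcont : Continuous fun t : ℝ => (max 0 (c - t))^n / K := by fun_prop
    have hint : IntegrableOn (fun t : ℝ => (max 0 (c - t))^n / K) (Ioi a) := by
      have : Ioi a = Ioc a c ∪ Ioi c := (Set.Ioc_union_Ioi_eq_Ioi h.le).symm
      rw [this]
      refine (hcont.integrableOn_Ioc).union ?_
      refine (integrableOn_congr_fun (fun t (ht : c < t) => ?_) measurableSet_Ioi).mpr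
        (integrableOn_zero (s := Ioi c))
      rw [max_eq_left (by linarith), zero_pow hn.ne', zero_div]
    rw [← ofReal_integral_eq_lintegral_ofReal hint (ae_of_all _ (fun t => by positivity))]
    congr 1
    have hsplit : Ioi a = Ioc a c ∪ Ioi c := (Set.Ioc_union_Ioi_eq_Ioi h.le).symm
    rw [hsplit, setIntegral_union Set.Ioc_disjoint_Ioi_same measurableSet_Ioi
        (hint.mono_set (by rw [hsplit]; exact subset_union_left))
        (hint.mono_set (by rw [hsplit]; exact subset_union_right))]
    have h2 : ∫ t in Ioi c, (max 0 (c - t))^n / K = 0 := by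
      rw [setIntegral_congr_fun measurableSet_Ioi (fun t (ht : c < t) => by
        rw [max_eq_left (by linarith), zero_pow hn.ne', zero_div])]
      simp
    rw [h2, add_zero,
      setIntegral_congr_fun measurableSet_Ioc (fun t ht => by
        rw [max_eq_right (by rcases ht with ⟨_, h2⟩; linarith)]),
      ← intervalIntegral.integral_of_le h.le]
    rw [intervalIntegral.integral_div,
      intervalIntegral.integral_comp_sub_left (fun x => x^n) c]
    simp [integral_pow, max_eq_right (by linarith : (0:ℝ) ≤ c - a), div_div]

lemma key_Ici (a c K : ℝ) (hK : 0 < K) (n : ℕ) (hn : 0 < n) :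
    ∫⁻ t in Ici a, ENNReal.ofReal ((max 0 (c - t))^n / K)
      = ENNReal.ofReal ((max 0 (c - a))^(n+1) / ((n+1) * K)) := by
  rw [← Measure.restrict_congr_set Ioi_ae_eq_Ici]; exact key_Ioi a c K hK n hn

lemma key2_Icc (a b : ℝ) (hab : a ≤ b) (g : ℝ → ℝ) (hg : Continuous g)
    (hnn : ∀ t ∈ Icc a b, 0 ≤ g t) :
    ∫⁻ t in Icc a b, ENNReal.ofReal (g t) = ENNReal.ofReal (∫ t in a..b, g t) := by
  rw [← ofReal_integral_eq_lintegral_ofReal hg.integrableOn_Icc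
    ((ae_restrict_iff' measurableSet_Icc).2 (ae_of_all _ hnn))]
  rw [intervalIntegral.integral_of_le hab, ← integral_Icc_eq_integral_Ioc]

lemma key2_Ico (a b : ℝ) (hab : a ≤ b) (g : ℝ → ℝ) (hg : Continuous g)
    (hnn : ∀ t ∈ Icc a b, 0 ≤ g t) :
    ∫⁻ t in Ico a b, ENNReal.ofReal (g t) = ENNReal.ofReal (∫ t in a..b, g t) := by
  rw [Measure.restrict_congr_set Ico_ae_eq_Icc, key2_Icc a b hab g hg hnn]

lemma lint_ite (P : ℝ → Prop) [DecidablePred P] (A : Set ℝ) (hA : MeasurableSet A)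
    (h : ∀ t, P t ↔ t ∈ A) (G : ℝ → ℝ≥0∞) :
    ∫⁻ t, (if P t then G t else 0) = ∫⁻ t in A, G t := by
  classical
  rw [← lintegral_indicator hA]
  congr 1; funext t
  rw [Set.indicator_apply]
  split_ifs with h1 h2 h2 <;> first | rfl | (exact absurd ((h t).1 h1) h2) |
    (exact absurd ((h t).2 h2) h1)

lemma disj_Ico_Ici (a b : ℝ) : Disjoint (Ico a b) (Ici b) := by
  rw [Set.disjoint_left]
  rintro t ⟨_, h2⟩ h3
  exact absurd h3 (not_le.2 h2)

lemma forall5 (P : Fin 5 → Prop) : (∀ i, P i) ↔ P 0 ∧ P 1 ∧ P 2 ∧ P 3 ∧ P 4 :=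
  ⟨fun h => ⟨h 0, h 1, h 2, h 3, h 4⟩, fun ⟨a,b,c,d,e⟩ i => by fin_cases i <;> assumption⟩

/-! ### Measurability -/

lemma mle {f g : (Fin 5 → ℝ) → ℝ} (hf : Measurable f) (hg : Measurable g) :
    MeasurableSet {x | f x ≤ g x} := measurableSet_le hf hg

lemma hSmeas : MeasurableSet Sc := by
  have hs : Sc = (⋂ i, {x : Fin 5 → ℝ | 0 ≤ x i}) ∩
      ({x : Fin 5 → ℝ | x 0 + x 1 + x 2 + x 3 + x 4 ≤ 1} ∩
      ({x : Fin 5 → ℝ | 1 ≤ 2 * (x 0 + x 1 + x 4)} ∩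
       {x : Fin 5 → ℝ | 1 ≤ 2 * (x 0 + x 1 + x 2)})) := by
    ext x
    simp only [Sc, Set.mem_setOf_eq, Set.mem_inter_iff, Set.mem_iInter]
  rw [hs]
  exact (MeasurableSet.iInter fun i =>
      measurableSet_le measurable_const (measurable_pi_apply i)).inter
    ((mle (by fun_prop) (by fun_prop)).inter
      ((mle (by fun_prop) (by fun_prop)).inter (mle (by fun_prop) (by fun_prop))))

lemma hf4 : Measurable f4 := by
  unfold f4
  refine Measurable.ite ?_ (Measurable.ite ?_ ?_ measurable_const) measurable_const
  · simp only [Set.setOf_and]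
    exact ((mle measurable_const (by fun_prop)).inter
      ((mle measurable_const (by fun_prop)).inter
      ((mle measurable_const (by fun_prop)).inter (mle measurable_const (by fun_prop)))))
  · exact mle measurable_const (by fun_prop)
  · exact ENNReal.measurable_ofReal.comp (by fun_prop)

lemma hf3 : Measurable f3 := by
  unfold f3
  refine Measurable.ite ?_ (Measurable.ite ?_ ?_ measurable_const) measurable_const
  · simp only [Set.setOf_and]
    exact (mle measurable_const (by fun_prop)).inter (mle measurable_const (by fun_prop))
  · simp only [Set.setOf_and]
    exact (mle measurable_const (by fun_prop)).inter (mle measurable_const (by fun_prop))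
  · exact ENNReal.measurable_ofReal.comp (by fun_prop)

lemma hf2 : Measurable f2 := by
  unfold f2
  refine Measurable.ite ?_ (Measurable.ite ?_ ?_ measurable_const) measurable_const
  · exact mle measurable_const (by fun_prop)
  · exact mle measurable_const (by fun_prop)
  · exact ENNReal.measurable_ofReal.comp (by fun_prop)

lemma hf1 : Measurable f1 := by
  unfold f1
  refine Measurable.ite ?_ (Measurable.ite ?_ ?_ ?_) measurable_const
  · exact mle measurable_const (by fun_prop)
  · exact mle (by fun_prop) measurable_const
  · exact (ENNReal.measurable_ofReal.comp (by fun_prop)).add measurable_const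
  · exact ENNReal.measurable_ofReal.comp (by fun_prop)

/-! ### The five iterated integrations -/

lemma L5 : (fun x => ∫⁻ t, Sc.indicator 1 (update x 4 t)) = f4 := by
  funext x
  have e0 : ∀ t : ℝ, update x 4 t 0 = x 0 := fun t => update_of_ne (by decide) _ _
  have e1 : ∀ t : ℝ, update x 4 t 1 = x 1 := fun t => update_of_ne (by decide) _ _
  have e2 : ∀ t : ℝ, update x 4 t 2 = x 2 := fun t => update_of_ne (by decide) _ _
  have e3 : ∀ t : ℝ, update x 4 t 3 = x 3 := fun t => update_of_ne (by decide) _ _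
  have e4 : ∀ t : ℝ, update x 4 t 4 = t := fun t => update_self _ _ _
  have hpt : ∀ t : ℝ, Sc.indicator (1 : (Fin 5 → ℝ) → ℝ≥0∞) (update x 4 t) =
      if (0 ≤ x 0 ∧ 0 ≤ x 1 ∧ 0 ≤ x 2 ∧ 1 ≤ 2 * (x 0 + x 1 + x 2)) ∧ 0 ≤ x 3 then
        (if 0 ≤ t ∧ x 0 + x 1 + x 2 + x 3 + t ≤ 1 ∧ 1 ≤ 2 * (x 0 + x 1 + t) then (1:ℝ≥0∞) else 0)
      else 0 := by
    intro t
    classical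
    rw [Set.indicator_apply]
    simp only [Sc, Set.mem_setOf_eq, forall5, e0, e1, e2, e3, e4, Pi.one_apply]
    split_ifs with h1 h2 h3 <;> first | rfl | tauto
  rw [lintegral_congr hpt]
  by_cases hC : (0 ≤ x 0 ∧ 0 ≤ x 1 ∧ 0 ≤ x 2 ∧ 1 ≤ 2 * (x 0 + x 1 + x 2)) ∧ 0 ≤ x 3
  · simp only [if_pos hC]
    rw [lint_ite _ (Icc (max (1/2 - x 0 - x 1) 0) (1 - x 0 - x 1 - x 2 - x 3))
      measurableSet_Icc (fun t => by
        rw [mem_Icc, max_le_iff]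
        constructor
        · rintro ⟨h1, h2, h3⟩; exact ⟨⟨by linarith, h1⟩, by linarith⟩
        · rintro ⟨⟨h1, h2⟩, h3⟩; exact ⟨h2, by linarith, by linarith⟩)]
    rw [setLIntegral_one, Real.volume_Icc]
    have : f4 x = ENNReal.ofReal (1 - x 0 - x 1 - x 2 - x 3 - max (1/2 - x 0 - x 1) 0) := by
      unfold f4; rw [if_pos hC.1, if_pos hC.2]
    rw [this]
  · simp only [if_neg hC, lintegral_zero]
    unfold f4
    split_ifs with h1 h2
    · exact absurd ⟨h1, h2⟩ hC
    · rfl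
    · rfl

lemma L4 : (fun x => ∫⁻ t, f4 (update x 3 t)) = f3 := by
  funext x
  have e0 : ∀ t : ℝ, update x 3 t 0 = x 0 := fun t => update_of_ne (by decide) _ _
  have e1 : ∀ t : ℝ, update x 3 t 1 = x 1 := fun t => update_of_ne (by decide) _ _
  have e2 : ∀ t : ℝ, update x 3 t 2 = x 2 := fun t => update_of_ne (by decide) _ _
  have e3 : ∀ t : ℝ, update x 3 t 3 = t := fun t => update_self _ _ _
  simp only [f4, e0, e1, e2, e3]
  by_cases hC : 0 ≤ x 0 ∧ 0 ≤ x 1 ∧ 0 ≤ x 2 ∧ 1 ≤ 2 * (x 0 + x 1 + x 2)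
  · simp only [if_pos hC]
    rw [lint_ite _ (Ici 0) measurableSet_Ici (fun t => by simp)]
    have hpt : ∀ t : ℝ, ENNReal.ofReal (1 - x 0 - x 1 - x 2 - t - max (1/2 - x 0 - x 1) 0)
        = ENNReal.ofReal
          ((max 0 ((1 - x 0 - x 1 - x 2 - max (1/2 - x 0 - x 1) 0) - t))^1 / 1) := by
      intro t
      rw [pow_one, div_one, ← ofReal_max0]
      congr 1; ring
    simp only [hpt]
    rw [key_Ici 0 _ 1 one_pos 1 one_pos]
    have h3 : f3 x = ENNReal.ofReal
        ((max 0 (1 - x 0 - x 1 - x 2 - max (1/2 - x 0 - x 1) 0))^2 / 2) := by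
      unfold f3
      rw [if_pos ⟨hC.1, hC.2.1⟩, if_pos ⟨hC.2.2.1, hC.2.2.2⟩]
    rw [h3]
    norm_num
  · simp only [if_neg hC, lintegral_zero]
    unfold f3
    split_ifs with h1 h2
    · exact absurd ⟨h1.1, h1.2, h2.1, h2.2⟩ hC
    · rfl
    · rfl

lemma L3 : (fun x => ∫⁻ t, f3 (update x 2 t)) = f2 := by
  funext x
  have e0 : ∀ t : ℝ, update x 2 t 0 = x 0 := fun t => update_of_ne (by decide) _ _
  have e1 : ∀ t : ℝ, update x 2 t 1 = x 1 := fun t => update_of_ne (by decide) _ _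
  have e2 : ∀ t : ℝ, update x 2 t 2 = t := fun t => update_self _ _ _
  simp only [f3, e0, e1, e2]
  by_cases hC : 0 ≤ x 0 ∧ 0 ≤ x 1
  · simp only [if_pos hC]
    rw [lint_ite _ (Ici (max (1/2 - x 0 - x 1) 0)) measurableSet_Ici (fun t => by
      rw [mem_Ici, max_le_iff]
      constructor
      · rintro ⟨h1, h2⟩; exact ⟨by linarith, h1⟩
      · rintro ⟨h1, h2⟩; exact ⟨h2, by linarith⟩)]
    have hpt : ∀ t : ℝ,
        ENNReal.ofReal ((max 0 (1 - x 0 - x 1 - t - max (1/2 - x 0 - x 1) 0))^2 / 2)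
        = ENNReal.ofReal
          ((max 0 ((1 - x 0 - x 1 - max (1/2 - x 0 - x 1) 0) - t))^2 / 2) := by
      intro t; congr 3; ring
    simp only [hpt]
    rw [key_Ici _ _ 2 two_pos 2 (by norm_num)]
    have h2 : f2 x = ENNReal.ofReal
        ((max 0 (1 - x 0 - x 1 - 2 * max (1/2 - x 0 - x 1) 0))^3 / 6) := by
      unfold f2
      rw [if_pos hC.1, if_pos hC.2]
    rw [h2]
    norm_num
    congr 2
    ring
  · simp only [if_neg hC, lintegral_zero]
    unfold f2
    split_ifs with h1 h2
    · exact absurd ⟨h1, h2⟩ hC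
    · rfl
    · rfl

lemma L2 : (fun x => ∫⁻ t, f2 (update x 1 t)) = f1 := by
  funext x
  have e0 : ∀ t : ℝ, update x 1 t 0 = x 0 := fun t => update_of_ne (by decide) _ _
  have e1 : ∀ t : ℝ, update x 1 t 1 = t := fun t => update_self _ _ _
  simp only [f2, e0, e1]
  by_cases hx : 0 ≤ x 0
  · simp only [if_pos hx]
    rw [lint_ite _ (Ici 0) measurableSet_Ici (fun t => by simp)]
    set T : ℝ := max (1/2 - x 0) 0 with hT
    have hT0 : 0 ≤ T := le_max_right _ _
    have hT1 : 1/2 - x 0 ≤ T := le_max_left _ _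
    rw [← Set.Ico_union_Ici_eq_Ici hT0,
      lintegral_union measurableSet_Ici (disj_Ico_Ici 0 T)]
    have hp1 : ∫⁻ t in Ico 0 T,
        ENNReal.ofReal ((max 0 (1 - x 0 - t - 2 * max (1/2 - x 0 - t) 0))^3 / 6)
        = ENNReal.ofReal (((x 0 + T)^4 - (x 0)^4) / 4 / 6) := by
      rw [setLIntegral_congr_fun measurableSet_Ico
        (fun t ht => ?_), key2_Ico 0 T hT0 (fun t => (x 0 + t)^3/6) (by fun_prop)
          (fun t ht => div_nonneg (pow_nonneg (by linarith [ht.1]) 3) (by norm_num))]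
      · rw [intervalIntegral.integral_div,
          intervalIntegral.integral_comp_add_left (fun u => u^3) (x 0)]
        simp [integral_pow]
        norm_num
      · obtain ⟨ht0, htT⟩ := ht
        have h1 : t < 1/2 - x 0 := by
          rcases le_or_gt (1/2 - x 0) 0 with h | h
          · exfalso; rw [hT, max_eq_right h] at htT; linarith
          · rw [hT, max_eq_left h.le] at htT; linarith
        rw [max_eq_left (by linarith : (0:ℝ) ≤ 1/2 - x 0 - t)]
        rw [show (1:ℝ) - x 0 - t - 2 * (1/2 - x 0 - t) = x 0 + t by ring,
          max_eq_right (by linarith : (0:ℝ) ≤ x 0 + t)]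
    have hp2 : ∫⁻ t in Ici T,
        ENNReal.ofReal ((max 0 (1 - x 0 - t - 2 * max (1/2 - x 0 - t) 0))^3 / 6)
        = ENNReal.ofReal ((max 0 (1 - x 0 - T))^4 / (4 * 6)) := by
      rw [setLIntegral_congr_fun measurableSet_Ici (fun t ht => ?_)]
      · have h := key_Ici T (1 - x 0) 6 (by norm_num) 3 (by norm_num)
        norm_num at h
        rw [h]
        norm_num
      · have htT : T ≤ t := ht
        rw [max_eq_right (by linarith : 1/2 - x 0 - t ≤ 0)]
        rw [show (1:ℝ) - x 0 - t - 2 * 0 = (1 - x 0) - t by ring]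
    rw [hp1, hp2]
    by_cases h12 : x 0 ≤ 1/2
    · have hTv : T = 1/2 - x 0 := max_eq_left (by linarith)
      have h1 : f1 x = ENNReal.ofReal ((1/16 - (x 0)^4) / 24) + ENNReal.ofReal (1/384) := by
        unfold f1; rw [if_pos hx, if_pos h12]
      rw [h1, hTv]
      congr 1
      · congr 1; ring_nf
      · congr 1
        rw [show (1:ℝ) - x 0 - (1/2 - x 0) = 1/2 by ring]
        norm_num
    · have hTv : T = 0 := max_eq_right (by linarith)
      have h1 : f1 x = ENNReal.ofReal ((max 0 (1 - x 0))^4 / 24) := by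
        unfold f1; rw [if_pos hx, if_neg h12]
      rw [h1, hTv]
      norm_num
  · simp only [if_neg hx, lintegral_zero]
    unfold f1
    rw [if_neg hx]

lemma L1 (x : Fin 5 → ℝ) : ∫⁻ t, f1 (update x 0 t) = 1/384 := by
  have e0 : ∀ t : ℝ, update x 0 t 0 = t := fun t => update_self _ _ _
  simp only [f1, e0]
  rw [lint_ite _ (Ici 0) measurableSet_Ici (fun t => by simp)]
  rw [← Set.Icc_union_Ioi_eq_Ici (by norm_num : (0:ℝ) ≤ 1/2),
    lintegral_union measurableSet_Ioi (by
      rw [Set.disjoint_left]; rintro t ⟨_, h2⟩ h3; exact absurd h3 (not_lt.2 h2))]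
  have hp1 : ∫⁻ t in Icc 0 (1/2 : ℝ),
      (if t ≤ 1/2 then
        ENNReal.ofReal ((1/16 - t^4) / 24) + ENNReal.ofReal (1/384)
       else ENNReal.ofReal ((max 0 (1 - t))^4 / 24))
      = ENNReal.ofReal (3/1280) := by
    rw [setLIntegral_congr_fun measurableSet_Icc (fun t ht => ?_),
      key2_Icc 0 (1/2) (by norm_num) (fun t => 1/192 - t^4/24) (by fun_prop)
        (fun t ht => by
          have h4 := pow_le_pow_left₀ ht.1 ht.2 4
          norm_num at h4 ⊢; linarith)]
    · rw [intervalIntegral.integral_sub (intervalIntegrable_const)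
        (((continuous_pow 4).div_const 24).intervalIntegrable _ _)]
      simp [intervalIntegral.integral_div, integral_pow]
      norm_num
    · rw [if_pos ht.2, ← ENNReal.ofReal_add (by
        have h4 := pow_le_pow_left₀ ht.1 ht.2 4
        norm_num at h4 ⊢; linarith) (by norm_num)]
      congr 1; ring
  have hp2 : ∫⁻ t in Ioi (1/2 : ℝ),
      (if t ≤ 1/2 then
        ENNReal.ofReal ((1/16 - t^4) / 24) + ENNReal.ofReal (1/384)
       else ENNReal.ofReal ((max 0 (1 - t))^4 / 24))
      = ENNReal.ofReal (1/3840) := by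
    rw [setLIntegral_congr_fun measurableSet_Ioi (fun t (ht : 1/2 < t) => by
      rw [if_neg (not_le.2 ht)])]
    have h := key_Ioi (1/2) 1 24 (by norm_num) 4 (by norm_num)
    norm_num at h
    rw [h]
  rw [hp1, hp2, ← ENNReal.ofReal_add (by norm_num) (by norm_num)]
  rw [show (3:ℝ)/1280 + 1/3840 = 1/384 by norm_num]
  rw [ENNReal.ofReal_div_of_pos (by norm_num)]
  norm_num

end CondorcetAux

end CondorcetAux

open CondorcetAux in
/-- The 5-dimensional Lebesgue volume of the polytope
`P_C = {x ∈ ℝ^5 : xᵢ ≥ 0, x1+⋯+x5 ≤ 1, 2(x1+x2+x5) ≥ 1, 2(x1+x2+x3) ≥ 1}`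
(the set of voting situations in which candidate `a` is the Condorcet winner)
equals `1/384`. -/
theorem volume_condorcet_winner_polytope :
    volume {x : Fin 5 → ℝ |
      (∀ i, 0 ≤ x i) ∧ x 0 + x 1 + x 2 + x 3 + x 4 ≤ 1 ∧
      1 ≤ 2 * (x 0 + x 1 + x 4) ∧ 1 ≤ 2 * (x 0 + x 1 + x 2)} = 1 / 384 := by
  have hset : {x : Fin 5 → ℝ |
      (∀ i, 0 ≤ x i) ∧ x 0 + x 1 + x 2 + x 3 + x 4 ≤ 1 ∧
      1 ≤ 2 * (x 0 + x 1 + x 4) ∧ 1 ≤ 2 * (x 0 + x 1 + x 2)} = Sc := rfl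
  rw [hset, ← lintegral_indicator_one hSmeas, volume_pi,
    lintegral_eq_lmarginal_univ (fun _ : Fin 5 => (0:ℝ)),
    show (Finset.univ : Finset (Fin 5)) = insert 4 (insert 3 (insert 2 (insert 1 {0})))
      from by decide,
    lmarginal_insert' _ (measurable_one.indicator hSmeas) (by decide), L5,
    lmarginal_insert' _ hf4 (by decide), L4,
    lmarginal_insert' _ hf3 (by decide), L3,
    lmarginal_insert' _ hf2 (by decide), L2,
    lmarginal_singleton]
  exact L1 _
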